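/- Let G be a group, K ⊆ G a finite subset, and H = ⟨K⟩ the subgroup generated by K. Suppose that for every m ∈ ℕ (with m ≥ 1) there exists a finite nonempty set F_m ⊆ G such that |xF_m \ F_m| ≤ |F_m|/m for all x ∈ K. Then for every n ≥ 1 there exists a finite nonempty set E ⊆ H with |KE \ E| ≤ |E|/n; that is, H has Følner sets with respect to K. -/

import Mathlib

open Pointwise

/-- If for every `m ≥ 1` there is a finite nonempty `F_m ⊆ G` with `|xF_m \ F_m| ≤ |F_m|/m`
for all `x ∈ K`, then for every `n ≥ 1` the subgroup `H = ⟨K⟩` contains a finite nonempty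
`E` with `|KE \ E| ≤ |E|/n`; i.e. `H` has Følner sets with respect to `K`. -/
theorem folner_sets_in_generated_subgroup {G : Type*} [Group G] (K : Finset G)
    (hfol : ∀ m : ℕ, 1 ≤ m → ∃ F : Set G, F.Finite ∧ F.Nonempty ∧
        ∀ x ∈ K, m * (x • F \ F).ncard ≤ F.ncard) :
    ∀ n : ℕ, 1 ≤ n → ∃ E : Set G, E.Finite ∧ E.Nonempty ∧
      E ⊆ (Subgroup.closure (K : Set G) : Set G) ∧
      n * (((K : Set G) * E) \ E).ncard ≤ E.ncard := by
  intro n hn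
  set H := Subgroup.closure (K : Set G) with hH
  rcases K.eq_empty_or_nonempty with hK | hK
  · refine ⟨{1}, Set.finite_singleton 1, Set.singleton_nonempty 1, ?_, ?_⟩
    · intro y hy
      simp_all [SetLike.mem_coe]
    · subst hK
      simp
  -- K nonempty
  obtain ⟨F, hFfin, hFne, hFbd⟩ := hfol (n * K.card) (by
    have := hK.card_pos; nlinarith)
  classical
  set A : Finset G := hFfin.toFinset with hA
  have hAcoe : (A : Set G) = F := hFfin.coe_toFinset
  have hAne : A.Nonempty := by
    rw [← Finset.coe_nonempty, hAcoe]; exact hFne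
  -- quotient by right cosets of H
  set r := QuotientGroup.rightRel H with hr
  set q : G → Quotient r := Quotient.mk r with hqdef
  have hq : ∀ x ∈ K, ∀ y : G, q (x * y) = q y := by
    intro x hx y
    refine Quotient.sound (QuotientGroup.rightRel_apply.mpr ?_)
    simp only [mul_inv_rev, mul_inv_cancel_left]
    exact H.inv_mem (Subgroup.subset_closure hx)
  -- fiber decomposition
  set Ac : Quotient r → Finset G := fun c => A.filter (fun y => q y = c) with hAc
  -- cardinality facts in Finset land
  have hfin1 : ∀ x : G, ((x • A \ A : Finset G) : Set G) = x • F \ F := by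
    intro x
    push_cast
    rw [hAcoe]
  have hbd : ∀ x ∈ K, n * K.card * (x • A \ A).card ≤ A.card := by
    intro x hx
    have := hFbd x hx
    rwa [← hfin1 x, ← hAcoe, Set.ncard_coe_finset, Set.ncard_coe_finset] at this
  -- fiberwise decomposition of x•A \ A
  have hdecomp : ∀ x ∈ K, (x • A \ A).card
      = ∑ c ∈ A.image q, (x • Ac c \ Ac c).card := by
    intro x hx
    rw [Finset.card_eq_sum_card_fiberwise (f := q) (t := A.image q) ?_]
    · refine Finset.sum_congr rfl fun c _ => ?_
      congr 1
      ext y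
      simp only [Finset.mem_filter, Finset.mem_sdiff, Finset.mem_smul_finset, hAc,
        smul_eq_mul]
      constructor
      · rintro ⟨⟨⟨a, ha, rfl⟩, hy2⟩, hy3⟩
        rw [hq x hx a] at hy3
        exact ⟨⟨a, ⟨ha, hy3⟩, rfl⟩, fun h => hy2 h.1⟩
      · rintro ⟨⟨a, ⟨ha, hqa⟩, rfl⟩, hy2⟩
        exact ⟨⟨⟨a, ha, rfl⟩, fun h => hy2 ⟨h, (hq x hx a).trans hqa⟩⟩,
          (hq x hx a).trans hqa⟩
    · intro y hy
      rw [Finset.mem_coe, Finset.mem_sdiff, Finset.mem_smul_finset] at hy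
      obtain ⟨⟨a, ha, rfl⟩, -⟩ := hy
      simp only [smul_eq_mul]
      rw [hq x hx a]
      exact Finset.mem_image_of_mem q ha
  -- sum over x of the bound
  have hsum : n * ∑ x ∈ K, (x • A \ A).card ≤ A.card := by
    have h1 : K.card * (n * ∑ x ∈ K, (x • A \ A).card) ≤ K.card * A.card := by
      calc K.card * (n * ∑ x ∈ K, (x • A \ A).card)
          = ∑ x ∈ K, n * K.card * (x • A \ A).card := by
            rw [Finset.mul_sum, Finset.mul_sum]; ring_nf
        _ ≤ ∑ _x ∈ K, A.card := Finset.sum_le_sum hbd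
        _ = K.card * A.card := by rw [Finset.sum_const, smul_eq_mul]
    exact le_of_mul_le_mul_left h1 hK.card_pos
  -- rewrite as sum over fibers
  have hsum2 : ∑ c ∈ A.image q, n * ∑ x ∈ K, (x • Ac c \ Ac c).card
      ≤ ∑ c ∈ A.image q, (Ac c).card := by
    have hA2 : A.card = ∑ c ∈ A.image q, (Ac c).card :=
      Finset.card_eq_sum_card_fiberwise (fun a ha => Finset.mem_image_of_mem q ha)
    calc ∑ c ∈ A.image q, n * ∑ x ∈ K, (x • Ac c \ Ac c).card
        = n * ∑ x ∈ K, ∑ c ∈ A.image q, (x • Ac c \ Ac c).card := by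
          simp_rw [Finset.mul_sum]
          rw [Finset.sum_comm]
      _ = n * ∑ x ∈ K, (x • A \ A).card := by
          congr 1
          exact Finset.sum_congr rfl fun x hx => (hdecomp x hx).symm
      _ ≤ A.card := hsum
      _ = _ := hA2
  -- pigeonhole
  obtain ⟨c, hc, hcle⟩ := Finset.exists_le_of_sum_le (hAne.image q) hsum2
  obtain ⟨t, ht, rfl⟩ := Finset.mem_image.mp hc
  set B : Finset G := Ac (q t) with hB
  have htB : t ∈ B := by simp [hB, hAc, ht]
  -- the Følner set
  refine ⟨(B : Set G) * {t⁻¹}, (B.finite_toSet).mul (Set.finite_singleton _),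
    ⟨1, t, htB, t⁻¹, rfl, mul_inv_cancel t⟩, ?_, ?_⟩
  · rintro y ⟨b, hb, s, hs, rfl⟩
    rcases hs with rfl
    have hb' : q b = q t := by
      have h2 := Finset.mem_coe.mp hb
      simp only [hB, hAc, Finset.mem_filter] at h2
      exact h2.2
    have hrel : QuotientGroup.rightRel H b t := Quotient.exact hb'
    have hmem : t * b⁻¹ ∈ H := QuotientGroup.rightRel_apply.mp hrel
    have : (t * b⁻¹)⁻¹ ∈ H := H.inv_mem hmem
    simpa [mul_inv_rev] using this
  · -- main bound
    have hinj : Function.Injective (fun y : G => y * t⁻¹) :=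
      fun a b h => by simpa using h
    have hcard : ((B : Set G) * {t⁻¹}).ncard = B.card := by
      rw [Set.mul_singleton, Set.ncard_image_of_injective _ hinj, Set.ncard_coe_finset]
    have hKE : ((K : Set G) * ((B : Set G) * {t⁻¹})) \ ((B : Set G) * {t⁻¹})
        = (((K * B : Finset G) : Set G) \ (B : Set G)) * {t⁻¹} := by
      rw [← mul_assoc, Finset.coe_mul, Set.mul_singleton, Set.mul_singleton,
        Set.mul_singleton, ← Set.image_diff hinj]
    rw [hKE, hcard, Set.mul_singleton, Set.ncard_image_of_injective _ hinj,
      ← Finset.coe_sdiff, Set.ncard_coe_finset]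
    -- now: n * (K*B \ B).card ≤ B.card
    have hsub : ((K * B) \ B : Finset G) ⊆ K.biUnion (fun x => x • B \ B) := by
      intro y hy
      rw [Finset.mem_sdiff, Finset.mem_mul] at hy
      obtain ⟨⟨x, hx, b, hb, rfl⟩, hy2⟩ := hy
      rw [Finset.mem_biUnion]
      exact ⟨x, hx, Finset.mem_sdiff.mpr ⟨Finset.smul_mem_smul_finset hb, hy2⟩⟩
    calc n * ((K * B) \ B : Finset G).card
        ≤ n * (K.biUnion (fun x => x • B \ B)).card :=
          Nat.mul_le_mul_left n (Finset.card_le_card hsub)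
      _ ≤ n * ∑ x ∈ K, (x • B \ B).card :=
          Nat.mul_le_mul_left n (Finset.card_biUnion_le)
      _ ≤ B.card := hcle
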